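/- arXiv:0903.4870 — 3 statements merged into one kernel-verified Lean document; each statement's English description precedes it below -/
import Mathlib

section
/- Let u : L ⟶ M and f : F ⟶ M be morphisms of ℤ-indexed cochain complexes of abelian groups and let k be an integer. Let φ : L ⊕ F ⟶ M be the morphism φ(l,x) = u(l) + f(x), and let φ_k : L ⊕ σ_{≥k}F ⟶ M be its restriction along the inclusion σ_{≥k}F ⊆ F. Then the degreewise maps Cone(φ_k)^n = L^n ⊕ (σ_{≥k}F)^n ⊕ M^{n−1} → Cone(φ)^n = L^n ⊕ F^n ⊕ M^{n−1} induced by the inclusion σ_{≥k}F ⊆ F, and Cone(φ)^n → (σ_{<k}F)^n given by projecting onto the F-component followed by the quotient map F → σ_{<k}F, are chain maps, and they form a short exact sequence of cochain complexes 0 → Cone(φ_k) → Cone(φ) → σ_{<k}F → 0 (exact in every degree). -/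
/-! Basic framework: ℤ-indexed cochain complexes of abelian groups, chain maps,
cohomology, mapping cones (with the sign convention
`d(a,b) = (d a, (-1)^(n+1) f a + d b)`), brutal truncations. -/

universe u

structure Cplx : Type (u + 1) where
  X : ℤ → Type u
  inst : ∀ n, AddCommGroup (X n)
  d : ∀ n, X n →+ X (n + 1)
  dsq : ∀ (n : ℤ) (x : X n), d (n + 1) (d n x) = 0

attribute [instance] Cplx.inst

namespace Cplx

/-- Transport along an equality of degrees. -/
def tr (C : Cplx) {m n : ℤ} (h : m = n) : C.X m →+ C.X n where
  toFun x := _root_.cast (congrArg C.X h) x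
  map_zero' := by subst h; rfl
  map_add' := by subst h; intros; rfl

lemma tr_tr (C : Cplx) {m n p : ℤ} (h1 : m = n) (h2 : n = p) (x : C.X m) :
    C.tr h2 (C.tr h1 x) = C.tr (h1.trans h2) x := by subst h1; subst h2; rfl

lemma d_tr (C : Cplx) {m n : ℤ} (h : m = n) (x : C.X m) :
    C.d n (C.tr h x) = C.tr (congrArg (· + 1) h) (C.d m x) := by subst h; rfl

/-- Morphisms of cochain complexes. -/
structure Hom (A B : Cplx) where
  f : ∀ n, A.X n →+ B.X n
  comm : ∀ (n : ℤ) (x : A.X n), f (n + 1) (A.d n x) = B.d n (f n x)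

def Hom.comp {A B C : Cplx} (g : Hom B C) (h : Hom A B) : Hom A C where
  f n := (g.f n).comp (h.f n)
  comm n x := by simp only [AddMonoidHom.comp_apply, h.comm, g.comm]

lemma Hom.f_tr {A B : Cplx} (g : Hom A B) {m n : ℤ} (h : m = n) (x : A.X m) :
    g.f n (A.tr h x) = B.tr h (g.f m x) := by subst h; rfl

/-- The subgroup of cocycles in degree `n`. -/
def Zc (C : Cplx) (n : ℤ) : AddSubgroup (C.X n) := (C.d n).ker

lemma mem_Zc {C : Cplx} {n : ℤ} {x : C.X n} : x ∈ C.Zc n ↔ C.d n x = 0 :=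
  AddMonoidHom.mem_ker

/-- The subgroup of coboundaries in degree `n`. -/
def Bd (C : Cplx) (n : ℤ) : AddSubgroup (C.X n) :=
  AddSubgroup.map (C.tr (show n - 1 + 1 = n by omega)) (C.d (n - 1)).range

/-- The `n`-th cohomology group. -/
def H (C : Cplx) (n : ℤ) : Type u :=
  ↥(C.Zc n) ⧸ (C.Bd n).addSubgroupOf (C.Zc n)

instance (C : Cplx) (n : ℤ) : AddCommGroup (C.H n) :=
  inferInstanceAs (AddCommGroup (↥(C.Zc n) ⧸ (C.Bd n).addSubgroupOf (C.Zc n)))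

/-- The cohomology class of a cocycle. -/
def clsOf (C : Cplx) (n : ℤ) (x : C.X n) (hx : x ∈ C.Zc n) : C.H n :=
  QuotientAddGroup.mk (⟨x, hx⟩ : C.Zc n)

/-- The map induced on cocycles by a chain map. -/
def zMap {A B : Cplx} (g : Hom A B) (n : ℤ) : ↥(A.Zc n) →+ ↥(B.Zc n) :=
  AddMonoidHom.codRestrict ((g.f n).comp (A.Zc n).subtype) (B.Zc n) (fun x => by
    have hx : A.d n ((A.Zc n).subtype x) = 0 := mem_Zc.mp x.2
    exact mem_Zc.mpr (by rw [AddMonoidHom.comp_apply, ← g.comm, hx, map_zero]))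

/-- The map induced on cohomology by a chain map. -/
def Hmap {A B : Cplx} (g : Hom A B) (n : ℤ) : A.H n →+ B.H n :=
  QuotientAddGroup.map _ _ (zMap g n) (by
    intro x hx
    rw [AddSubgroup.mem_comap, AddSubgroup.mem_addSubgroupOf]
    rw [AddSubgroup.mem_addSubgroupOf] at hx
    obtain ⟨y, hy, hxy⟩ := hx
    obtain ⟨z, rfl⟩ := hy
    have hcoe : ((zMap g n x : ↥(B.Zc n)) : B.X n) = g.f n (x : A.X n) := rfl
    rw [hcoe, ← hxy, Hom.f_tr]
    exact AddSubgroup.mem_map.mpr ⟨B.d (n - 1) (g.f (n - 1) z),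
      AddMonoidHom.mem_range.mpr ⟨g.f (n - 1) z, rfl⟩, by rw [g.comm]⟩)

/-- Direct sum of two cochain complexes. -/
def dsum (A B : Cplx) : Cplx where
  X n := A.X n × B.X n
  inst n := inferInstance
  d n := (A.d n).prodMap (B.d n)
  dsq n x := by
    show (A.d (n + 1) (A.d n x.1), B.d (n + 1) (B.d n x.2)) = 0
    rw [A.dsq, B.dsq]; rfl

/-- The morphism `L ⊕ F ⟶ M`, `(l, x) ↦ u l + g x`. -/
def sumHom {L F M : Cplx} (u : Hom L M) (g : Hom F M) : Hom (dsum L F) M where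
  f n := (u.f n).coprod (g.f n)
  comm n x := by
    show u.f (n + 1) (L.d n x.1) + g.f (n + 1) (F.d n x.2) =
      M.d n (u.f n x.1 + g.f n x.2)
    rw [map_add, u.comm, g.comm]

/-- The mapping cone of a chain map, with differential
`d (a, b) = (d a, (-1)^(n+1) • g a + d b)`. -/
def cone {A B : Cplx} (g : Hom A B) : Cplx where
  X n := A.X n × B.X (n - 1)
  inst n := inferInstance
  d n := AddMonoidHom.mk' (fun p =>
      (A.d n p.1,
        B.tr (show n = n + 1 - 1 by omega) ((Int.negOnePow (n + 1) : ℤ) • g.f n p.1) +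
          B.tr (show n - 1 + 1 = n + 1 - 1 by omega) (B.d (n - 1) p.2)))
    (fun p q => by
      refine Prod.ext (map_add _ _ _) ?_
      show B.tr _ ((Int.negOnePow (n + 1) : ℤ) • g.f n (p.1 + q.1)) +
          B.tr _ (B.d (n - 1) (p.2 + q.2)) = _
      rw [map_add (g.f n), smul_add, map_add, map_add (B.d (n - 1)), map_add]
      simp only [Prod.snd_add]
      abel)
  dsq n p := by
    refine Prod.ext (A.dsq n p.1) ?_
    show B.tr (show n + 1 = n + 1 + 1 - 1 by omega)
          ((Int.negOnePow (n + 1 + 1) : ℤ) • g.f (n + 1) (A.d n p.1)) +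
        B.tr (show n + 1 - 1 + 1 = n + 1 + 1 - 1 by omega)
          (B.d (n + 1 - 1)
            (B.tr (show n = n + 1 - 1 by omega) ((Int.negOnePow (n + 1) : ℤ) • g.f n p.1) +
              B.tr (show n - 1 + 1 = n + 1 - 1 by omega) (B.d (n - 1) p.2))) = 0
    rw [map_add (B.d (n + 1 - 1)), d_tr, d_tr, map_add (B.tr _), tr_tr, tr_tr,
      B.dsq (n - 1) p.2, map_zero, add_zero, g.comm n p.1,
      map_zsmul (B.d n)]
    show B.tr (show n + 1 = n + 1 + 1 - 1 by omega)
        ((Int.negOnePow (n + 1 + 1) : ℤ) • B.d n (g.f n p.1)) +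
      B.tr (show n + 1 = n + 1 + 1 - 1 by omega)
        ((Int.negOnePow (n + 1) : ℤ) • B.d n (g.f n p.1)) = 0
    rw [← map_add, ← add_smul]
    have : ((Int.negOnePow (n + 1 + 1) : ℤ) + (Int.negOnePow (n + 1) : ℤ)) = 0 := by
      rw [Int.negOnePow_succ (n + 1), Units.val_neg, neg_add_cancel]
    rw [this, zero_smul, map_zero]

/-- A subcomplex determined by a `d`-stable family of subgroups. -/
def subCplx (C : Cplx) (S : ∀ n, AddSubgroup (C.X n))
    (hS : ∀ (n : ℤ) (x : C.X n), x ∈ S n → C.d n x ∈ S (n + 1)) : Cplx where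
  X n := S n
  inst n := inferInstance
  d n := AddMonoidHom.codRestrict ((C.d n).comp (S n).subtype) (S (n + 1))
    (fun x => hS n x.1 x.2)
  dsq n x := Subtype.ext (C.dsq n x.1)

/-- The inclusion of a subcomplex. -/
def subIncl (C : Cplx) (S : ∀ n, AddSubgroup (C.X n))
    (hS : ∀ (n : ℤ) (x : C.X n), x ∈ S n → C.d n x ∈ S (n + 1)) :
    Hom (subCplx C S hS) C where
  f n := (S n).subtype
  comm _ _ := rfl

/-- The quotient complex by a `d`-stable family of subgroups. -/
def quotCplx (C : Cplx) (S : ∀ n, AddSubgroup (C.X n))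
    (hS : ∀ (n : ℤ) (x : C.X n), x ∈ S n → C.d n x ∈ S (n + 1)) : Cplx where
  X n := C.X n ⧸ S n
  inst n := inferInstance
  d n := QuotientAddGroup.map (S n) (S (n + 1)) (C.d n) (fun x hx => by
    rw [AddSubgroup.mem_comap]; exact hS n x hx)
  dsq n x := by
    induction x using QuotientAddGroup.induction_on with
    | H z =>
      show QuotientAddGroup.map _ _ _ _ (QuotientAddGroup.map _ _ _ _ ((z : C.X n ⧸ S n))) = 0
      rw [QuotientAddGroup.map_mk, QuotientAddGroup.map_mk, C.dsq]
      rfl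

/-- The projection onto a quotient complex. -/
def quotProj (C : Cplx) (S : ∀ n, AddSubgroup (C.X n))
    (hS : ∀ (n : ℤ) (x : C.X n), x ∈ S n → C.d n x ∈ S (n + 1)) :
    Hom C (quotCplx C S hS) where
  f n := QuotientAddGroup.mk' (S n)
  comm _ _ := rfl

/-- The family of subgroups defining the brutal truncation `σ_{≥k}`. -/
def geSub (F : Cplx) (k n : ℤ) : AddSubgroup (F.X n) := if k ≤ n then ⊤ else ⊥

lemma geSub_stable (F : Cplx) (k : ℤ) :
    ∀ (n : ℤ) (x : F.X n), x ∈ geSub F k n → F.d n x ∈ geSub F k (n + 1) := by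
  intro n x hx
  by_cases h : k ≤ n + 1
  · simp [geSub, h]
  · have h' : ¬ k ≤ n := by omega
    simp only [geSub, h', if_neg, if_false, AddSubgroup.mem_bot] at hx
    simp [geSub, h, hx]

/-- The brutal truncation `σ_{≥k} F` (a subcomplex of `F`). -/
def truncGE (F : Cplx) (k : ℤ) : Cplx := subCplx F (geSub F k) (geSub_stable F k)

/-- The inclusion `σ_{≥k} F ⟶ F`. -/
def truncGEincl (F : Cplx) (k : ℤ) : Hom (truncGE F k) F :=
  subIncl F (geSub F k) (geSub_stable F k)

/-- The brutal truncation `σ_{<k} F` (a quotient complex of `F`). -/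
def truncLT (F : Cplx) (k : ℤ) : Cplx := quotCplx F (geSub F k) (geSub_stable F k)

/-- The projection `F ⟶ σ_{<k} F`. -/
def truncLTproj (F : Cplx) (k : ℤ) : Hom F (truncLT F k) :=
  quotProj F (geSub F k) (geSub_stable F k)

end Cplx

open Cplx in
/-- The short exact sequence of cone complexes
`0 → Cone(φ_k) → Cone(φ) → σ_{<k}F → 0`. -/
theorem stmt0 (L M F : Cplx) (u : Cplx.Hom L M) (f : Cplx.Hom F M) (k : ℤ) :
    ∃ (a : Cplx.Hom (cone (sumHom u (f.comp (truncGEincl F k)))) (cone (sumHom u f)))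
      (b : Cplx.Hom (cone (sumHom u f)) (truncLT F k)),
      (∀ (n : ℤ) (p : (cone (sumHom u (f.comp (truncGEincl F k)))).X n),
          a.f n p = ((p.1.1, (truncGEincl F k).f n p.1.2), p.2)) ∧
      (∀ (n : ℤ) (p : (cone (sumHom u f)).X n),
          b.f n p = QuotientAddGroup.mk' (geSub F k n) p.1.2) ∧
      (∀ n, Function.Injective (a.f n)) ∧
      (∀ n, (b.f n).ker = (a.f n).range) ∧
      (∀ n, Function.Surjective (b.f n)) := by
  refine ⟨⟨fun n => AddMonoidHom.mk' (fun p => ((p.1.1, (truncGEincl F k).f n p.1.2), p.2))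
      (fun p q => rfl), fun n x => rfl⟩,
    ⟨fun n => (QuotientAddGroup.mk' (geSub F k n)).comp
      (AddMonoidHom.mk' (fun p => p.1.2) (fun p q => rfl)), fun n x => rfl⟩,
    fun n p => rfl, fun n p => rfl, ?_, ?_, ?_⟩
  · intro n p q h
    replace h : _ ∧ _ := ⟨Prod.ext_iff.mp (Prod.ext_iff.mp h).1, (Prod.ext_iff.mp h).2⟩
    exact Prod.ext (Prod.ext h.1.1 (Subtype.ext h.1.2)) h.2
  · intro n
    ext p
    rw [AddMonoidHom.mem_ker, AddMonoidHom.mem_range]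
    constructor
    · intro h
      have h' : ((p.1.2 : F.X n) : F.X n ⧸ geSub F k n) = 0 := h
      exact ⟨((p.1.1, ⟨p.1.2, (QuotientAddGroup.eq_zero_iff _).mp h'⟩), p.2), rfl⟩
    · rintro ⟨q, rfl⟩
      exact (QuotientAddGroup.eq_zero_iff _).mpr q.1.2.2
  · intro n x
    induction x using QuotientAddGroup.induction_on with
    | H z => exact ⟨((0, z), 0), rfl⟩
end

section
/- Let 0 → L →u M →p N → 0 be a short exact sequence of ℤ-indexed cochain complexes of abelian groups (exact in every degree), and let f : F ⟶ M be a morphism of cochain complexes. Let φ : L ⊕ F ⟶ M be the morphism φ(l,x) = u(l) + f(x), and let ψ = p ∘ f : F ⟶ N. Then the degreewise map Cone(φ)^n = L^n ⊕ F^n ⊕ M^{n−1} → Cone(ψ)^n = F^n ⊕ N^{n−1} sending (l, x, m) to (x, p(m)) is a chain map Cone(φ) → Cone(ψ), and it is a quasi-isomorphism, i.e. it induces an isomorphism on cohomology in every degree. -/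
/-! Basic framework: ℤ-indexed cochain complexes of abelian groups, chain maps,
cohomology, mapping cones (with the sign convention
`d(a,b) = (d a, (-1)^(n+1) f a + d b)`), brutal truncations. -/

universe u

namespace Cplx

/-! ### Auxiliary lemmas -/

lemma tr_refl (C : Cplx) {n : ℤ} (h : n = n) (x : C.X n) : C.tr h x = x := rfl

lemma tr_inj (C : Cplx) {m n : ℤ} (h : m = n) : Function.Injective (C.tr h) := by
  subst h; exact fun a b hab => hab

lemma tr_eq_zero_iff (C : Cplx) {m n : ℤ} (h : m = n) (x : C.X m) :
    C.tr h x = 0 ↔ x = 0 := by subst h; exact Iff.rfl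

lemma cone_tr {A B : Cplx} (g : Hom A B) {m n : ℤ} (h : m = n) (x : (cone g).X m) :
    (cone g).tr h x = (A.tr h x.1, B.tr (congrArg (· - 1) h) x.2) := by subst h; rfl

lemma dsum_tr (A B : Cplx) {m n : ℤ} (h : m = n) (x : (dsum A B).X m) :
    (dsum A B).tr h x = (A.tr h x.1, B.tr h x.2) := by subst h; rfl

lemma cone_d {A B : Cplx} (g : Hom A B) (n : ℤ) (a : A.X n) (b : B.X (n - 1)) :
    (cone g).d n (a, b) =
      (A.d n a,
        B.tr (show n = n + 1 - 1 by omega) ((Int.negOnePow (n + 1) : ℤ) • g.f n a) +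
          B.tr (show n - 1 + 1 = n + 1 - 1 by omega) (B.d (n - 1) b)) := rfl

lemma negOnePow_sq (k : ℤ) :
    (Int.negOnePow k : ℤ) * (Int.negOnePow k : ℤ) = 1 := by
  rw [← Units.val_mul, Int.units_mul_self, Units.val_one]

lemma negOnePow_smul_negOnePow_smul {G : Type u} [AddCommGroup G] (k : ℤ) (x : G) :
    (Int.negOnePow k : ℤ) • (Int.negOnePow k : ℤ) • x = x := by
  rw [smul_smul, negOnePow_sq, one_smul]

lemma mem_Zc_cone {A B : Cplx} (g : Hom A B) (n : ℤ) (a : A.X n) (b : B.X (n - 1)) :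
    (a, b) ∈ (cone g).Zc n ↔ A.d n a = 0 ∧
      (Int.negOnePow (n + 1) : ℤ) • g.f n a +
        B.tr (show n - 1 + 1 = n by omega) (B.d (n - 1) b) = 0 := by
  have h2 : B.tr (show n - 1 + 1 = n + 1 - 1 by omega) (B.d (n - 1) b) =
      B.tr (show n = n + 1 - 1 by omega)
        (B.tr (show n - 1 + 1 = n by omega) (B.d (n - 1) b)) := by
    rw [tr_tr]
  refine mem_Zc.trans ?_
  rw [cone_d, h2, ← map_add]
  constructor
  · intro hh
    have ha : A.d n a = 0 := congrArg Prod.fst hh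
    have hb : B.tr (show n = n + 1 - 1 by omega)
        ((Int.negOnePow (n + 1) : ℤ) • g.f n a +
          B.tr (show n - 1 + 1 = n by omega) (B.d (n - 1) b)) = 0 := congrArg Prod.snd hh
    exact ⟨ha, (tr_eq_zero_iff B _ _).mp hb⟩
  · rintro ⟨ha, hb⟩
    have hb' : B.tr (show n = n + 1 - 1 by omega)
        ((Int.negOnePow (n + 1) : ℤ) • g.f n a +
          B.tr (show n - 1 + 1 = n by omega) (B.d (n - 1) b)) = 0 := by
      rw [hb, map_zero]
    exact Prod.ext_iff.mpr ⟨ha, hb'⟩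

lemma mem_Bd' {C : Cplx} {n : ℤ} {x : C.X n} :
    x ∈ C.Bd n ↔ ∃ y : C.X (n - 1), C.tr (show n - 1 + 1 = n by omega) (C.d (n - 1) y) = x := by
  simp only [Bd, AddSubgroup.mem_map, AddMonoidHom.mem_range]
  constructor
  · rintro ⟨a, ⟨y, rfl⟩, h⟩; exact ⟨y, h⟩
  · rintro ⟨y, h⟩; exact ⟨_, ⟨y, rfl⟩, h⟩

lemma mem_Bd_cone {A B : Cplx} (g : Hom A B) (n : ℤ) (a : A.X n) (b : B.X (n - 1)) :
    (a, b) ∈ (cone g).Bd n ↔ ∃ (a' : A.X (n - 1)) (b' : B.X (n - 1 - 1)),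
      A.tr (show n - 1 + 1 = n by omega) (A.d (n - 1) a') = a ∧
      (Int.negOnePow (n - 1 + 1) : ℤ) • g.f (n - 1) a' +
        B.tr (show n - 1 - 1 + 1 = n - 1 by omega) (B.d (n - 1 - 1) b') = b := by
  refine mem_Bd'.trans ?_
  constructor
  · rintro ⟨⟨a', b'⟩, h⟩
    rw [cone_tr, cone_d] at h
    have h1 : A.tr (show n - 1 + 1 = n by omega) (A.d (n - 1) a') = a :=
      congrArg Prod.fst h
    have h3 : B.tr (congrArg (· - 1) (show n - 1 + 1 = n by omega))
        (B.tr (show n - 1 = n - 1 + 1 - 1 by omega)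
            ((Int.negOnePow (n - 1 + 1) : ℤ) • g.f (n - 1) a') +
          B.tr (show n - 1 - 1 + 1 = n - 1 + 1 - 1 by omega) (B.d (n - 1 - 1) b')) = b :=
      congrArg Prod.snd h
    rw [map_add, tr_tr, tr_tr, tr_refl] at h3
    exact ⟨a', b', h1, h3⟩
  · rintro ⟨a', b', h1, h3⟩
    refine ⟨(a', b'), ?_⟩
    rw [cone_tr, cone_d]
    have key : B.tr (congrArg (· - 1) (show n - 1 + 1 = n by omega))
        (B.tr (show n - 1 = n - 1 + 1 - 1 by omega)
            ((Int.negOnePow (n - 1 + 1) : ℤ) • g.f (n - 1) a') +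
          B.tr (show n - 1 - 1 + 1 = n - 1 + 1 - 1 by omega) (B.d (n - 1 - 1) b')) = b := by
      rw [map_add, tr_tr, tr_tr, tr_refl]
      exact h3
    exact Prod.ext_iff.mpr ⟨h1, key⟩

/-- The map `Cone(φ) → Cone(ψ)`, `(l, x, m) ↦ (x, p m)`, as a chain map. -/
def coneMap (L M N F : Cplx) (u : Hom L M) (p : Hom M N) (f : Hom F M)
    (hpu : ∀ (n : ℤ) (l : L.X n), p.f n (u.f n l) = 0) :
    Hom (cone (sumHom u f)) (cone (p.comp f)) where
  f n := AddMonoidHom.mk' (fun z => (z.1.2, p.f (n - 1) z.2))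
    (fun z w => Prod.ext_iff.mpr ⟨rfl, map_add _ _ _⟩)
  comm n z := by
    refine Prod.ext_iff.mpr ⟨rfl, ?_⟩
    show p.f (n + 1 - 1)
        (M.tr (show n = n + 1 - 1 by omega)
            ((Int.negOnePow (n + 1) : ℤ) • (u.f n z.1.1 + f.f n z.1.2)) +
          M.tr (show n - 1 + 1 = n + 1 - 1 by omega) (M.d (n - 1) z.2)) =
      N.tr (show n = n + 1 - 1 by omega)
          ((Int.negOnePow (n + 1) : ℤ) • p.f n (f.f n z.1.2)) +
        N.tr (show n - 1 + 1 = n + 1 - 1 by omega) (N.d (n - 1) (p.f (n - 1) z.2))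
    rw [map_add (p.f (n + 1 - 1)), Hom.f_tr, Hom.f_tr, map_zsmul, map_add, hpu,
      zero_add, p.comm]

end Cplx

open Cplx in
/-- The map `Cone(φ) → Cone(ψ)`, `(l, x, m) ↦ (x, p m)` is a chain map and a
quasi-isomorphism. -/
theorem stmt1 (L M N F : Cplx) (u : Cplx.Hom L M) (p : Cplx.Hom M N)
    (hinj : ∀ n, Function.Injective (u.f n))
    (hexact : ∀ n, (p.f n).ker = (u.f n).range)
    (hsurj : ∀ n, Function.Surjective (p.f n))
    (f : Cplx.Hom F M) :
    ∃ θ : Cplx.Hom (cone (sumHom u f)) (cone (p.comp f)),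
      (∀ (n : ℤ) (x : (cone (sumHom u f)).X n),
          θ.f n x = (x.1.2, p.f (n - 1) x.2)) ∧
      (∀ n, Function.Bijective (Hmap θ n)) := by
  have hpu : ∀ (n : ℤ) (l : L.X n), p.f n (u.f n l) = 0 := by
    intro n l
    have : u.f n l ∈ (u.f n).range := ⟨l, rfl⟩
    rw [← hexact n] at this
    exact this
  refine ⟨coneMap L M N F u p f hpu, fun n x => rfl, fun n => ⟨?_, ?_⟩⟩
  · -- injectivity
    refine (injective_iff_map_eq_zero _).mpr ?_
    intro c hc
    obtain ⟨z, rfl⟩ := QuotientAddGroup.mk_surjective c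
    obtain ⟨⟨⟨l, x⟩, m⟩, hz⟩ := z
    have hz' := (mem_Zc_cone (sumHom u f) n (l, x) m).mp hz
    have hdx : F.d n x = 0 := congrArg Prod.snd hz'.1
    have hz2 : (Int.negOnePow (n + 1) : ℤ) • (u.f n l + f.f n x) +
        M.tr (show n - 1 + 1 = n by omega) (M.d (n - 1) m) = 0 := hz'.2
    have hεδ : (Int.negOnePow (n + 1) : ℤ) = -(Int.negOnePow (n - 1 + 1) : ℤ) := by
      rw [congrArg Int.negOnePow (show n - 1 + 1 = n by omega), Int.negOnePow_succ,
        Units.val_neg]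
    have hul : u.f n l = (Int.negOnePow (n - 1 + 1) : ℤ) •
        M.tr (show n - 1 + 1 = n by omega) (M.d (n - 1) m) - f.f n x := by
      have h5 : (Int.negOnePow (n + 1) : ℤ) •
          ((Int.negOnePow (n + 1) : ℤ) • (u.f n l + f.f n x) +
            M.tr (show n - 1 + 1 = n by omega) (M.d (n - 1) m)) = 0 := by
        rw [hz2, smul_zero]
      rw [smul_add, smul_smul, negOnePow_sq, one_smul, hεδ, neg_smul] at h5
      exact eq_sub_of_add_eq (add_neg_eq_zero.mp h5)
    have h0 : QuotientAddGroup.mk (zMap (coneMap L M N F u p f hpu) n ⟨((l, x), m), hz⟩) =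
        (0 : (cone (p.comp f)).H n) := hc
    have hmem : ((x, p.f (n - 1) m) : (cone (p.comp f)).X n) ∈ (cone (p.comp f)).Bd n :=
      AddSubgroup.mem_addSubgroupOf.mp ((QuotientAddGroup.eq_zero_iff _).mp h0)
    obtain ⟨y, ν', hy, hν0⟩ := (mem_Bd_cone (p.comp f) n x (p.f (n - 1) m)).mp hmem
    have hν : (Int.negOnePow (n - 1 + 1) : ℤ) • p.f (n - 1) (f.f (n - 1) y) +
        N.tr (show n - 1 - 1 + 1 = n - 1 by omega) (N.d (n - 1 - 1) ν') = p.f (n - 1) m := hν0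
    obtain ⟨m', hm'⟩ := hsurj (n - 1 - 1) ν'
    have hpw : p.f (n - 1) ((Int.negOnePow (n - 1 + 1) : ℤ) • f.f (n - 1) y +
        M.tr (show n - 1 - 1 + 1 = n - 1 by omega) (M.d (n - 1 - 1) m') - m) = 0 := by
      rw [map_sub, map_add, map_zsmul, Hom.f_tr, p.comm, hm', hν, sub_self]
    obtain ⟨l'', hl''⟩ : ∃ l'', u.f (n - 1) l'' =
        (Int.negOnePow (n - 1 + 1) : ℤ) • f.f (n - 1) y +
        M.tr (show n - 1 - 1 + 1 = n - 1 by omega) (M.d (n - 1 - 1) m') - m := by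
      have hk := AddMonoidHom.mem_ker.mpr hpw
      rw [hexact (n - 1)] at hk
      exact hk
    have hulam : u.f (n - 1) (-((Int.negOnePow (n - 1 + 1) : ℤ) • l'')) =
        -((Int.negOnePow (n - 1 + 1) : ℤ) •
          ((Int.negOnePow (n - 1 + 1) : ℤ) • f.f (n - 1) y +
            M.tr (show n - 1 - 1 + 1 = n - 1 by omega) (M.d (n - 1 - 1) m') - m)) := by
      rw [map_neg, map_zsmul, hl'']
    have step3 : M.d (n - 1) ((Int.negOnePow (n - 1 + 1) : ℤ) • f.f (n - 1) y +
        M.tr (show n - 1 - 1 + 1 = n - 1 by omega) (M.d (n - 1 - 1) m') - m) =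
        (Int.negOnePow (n - 1 + 1) : ℤ) • f.f (n - 1 + 1) (F.d (n - 1) y) -
          M.d (n - 1) m := by
      rw [map_sub, map_add, map_zsmul, d_tr, M.dsq, map_zero, add_zero, ← f.comm]
    have step4 : M.tr (show n - 1 + 1 = n by omega) (f.f (n - 1 + 1) (F.d (n - 1) y)) =
        f.f n x := by
      rw [← Hom.f_tr, hy]
    have hL : L.tr (show n - 1 + 1 = n by omega)
        (L.d (n - 1) (-((Int.negOnePow (n - 1 + 1) : ℤ) • l''))) = l := by
      apply hinj n
      rw [Hom.f_tr, u.comm, hulam, map_neg, map_zsmul, step3, map_neg, map_zsmul,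
        map_sub, map_zsmul, step4, hul, smul_sub, smul_smul, negOnePow_sq, one_smul,
        neg_sub]
    have hM : (Int.negOnePow (n - 1 + 1) : ℤ) •
        (u.f (n - 1) (-((Int.negOnePow (n - 1 + 1) : ℤ) • l'')) + f.f (n - 1) y) +
        M.tr (show n - 1 - 1 + 1 = n - 1 by omega) (M.d (n - 1 - 1) m') = m := by
      rw [smul_add, hulam, smul_neg, smul_smul, negOnePow_sq, one_smul]
      abel
    have hBd : (((l, x), m) : (cone (sumHom u f)).X n) ∈ (cone (sumHom u f)).Bd n := by
      refine (mem_Bd_cone _ _ _ _).mpr ?_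
      refine ⟨(-((Int.negOnePow (n - 1 + 1) : ℤ) • l''), y), m', ?_, hM⟩
      rw [dsum_tr]
      exact Prod.ext_iff.mpr ⟨hL, hy⟩
    exact (QuotientAddGroup.eq_zero_iff _).mpr (AddSubgroup.mem_addSubgroupOf.mpr hBd)
  · -- surjectivity
    intro c
    obtain ⟨z, rfl⟩ := QuotientAddGroup.mk_surjective c
    obtain ⟨⟨x, ν⟩, hz⟩ := z
    obtain ⟨hdx, hcyc0⟩ := (mem_Zc_cone (p.comp f) n x ν).mp hz
    have hcyc : (Int.negOnePow (n + 1) : ℤ) • p.f n (f.f n x) +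
        N.tr (show n - 1 + 1 = n by omega) (N.d (n - 1) ν) = 0 := hcyc0
    obtain ⟨m, hm⟩ := hsurj (n - 1) ν
    have hpw : p.f n ((Int.negOnePow (n + 1) : ℤ) • f.f n x +
        M.tr (show n - 1 + 1 = n by omega) (M.d (n - 1) m)) = 0 := by
      rw [map_add, map_zsmul, Hom.f_tr, p.comm, hm]
      exact hcyc
    obtain ⟨l', hl'⟩ : ∃ l', u.f n l' = (Int.negOnePow (n + 1) : ℤ) • f.f n x +
        M.tr (show n - 1 + 1 = n by omega) (M.d (n - 1) m) := by
      have hk : ((Int.negOnePow (n + 1) : ℤ) • f.f n x +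
          M.tr (show n - 1 + 1 = n by omega) (M.d (n - 1) m)) ∈ (p.f n).ker :=
        AddMonoidHom.mem_ker.mpr hpw
      rw [hexact n] at hk
      exact hk
    have hul : u.f n (-((Int.negOnePow (n + 1) : ℤ) • l')) =
        -((Int.negOnePow (n + 1) : ℤ) • ((Int.negOnePow (n + 1) : ℤ) • f.f n x +
          M.tr (show n - 1 + 1 = n by omega) (M.d (n - 1) m))) := by
      rw [map_neg, map_zsmul, hl']
    have hdl : L.d n (-((Int.negOnePow (n + 1) : ℤ) • l')) = 0 := by
      apply hinj (n + 1)
      rw [map_zero, u.comm, hul, map_neg, map_zsmul, map_add, map_zsmul, ← f.comm,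
        hdx, map_zero, smul_zero, d_tr, M.dsq, map_zero, add_zero, smul_zero, neg_zero]
    have hz2 : (((-((Int.negOnePow (n + 1) : ℤ) • l'), x), m) :
        (cone (sumHom u f)).X n) ∈ (cone (sumHom u f)).Zc n := by
      refine (mem_Zc_cone _ _ _ _).mpr ?_
      constructor
      · exact Prod.ext_iff.mpr ⟨hdl, hdx⟩
      · show (Int.negOnePow (n + 1) : ℤ) •
            (u.f n (-((Int.negOnePow (n + 1) : ℤ) • l')) + f.f n x) +
            M.tr (show n - 1 + 1 = n by omega) (M.d (n - 1) m) = 0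
        rw [smul_add, hul, smul_neg, smul_smul, negOnePow_sq, one_smul]
        abel
    refine ⟨QuotientAddGroup.mk ⟨((-((Int.negOnePow (n + 1) : ℤ) • l'), x), m), hz2⟩, ?_⟩
    have hv : (zMap (coneMap L M N F u p f hpu) n
        ⟨((-((Int.negOnePow (n + 1) : ℤ) • l'), x), m), hz2⟩) =
        (⟨(x, ν), hz⟩ : ↥((cone (p.comp f)).Zc n)) :=
      Subtype.ext (Prod.ext_iff.mpr ⟨rfl, hm⟩)
    show QuotientAddGroup.mk (zMap (coneMap L M N F u p f hpu) n
        ⟨((-((Int.negOnePow (n + 1) : ℤ) • l'), x), m), hz2⟩) = _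
    rw [hv]
end

section
/- Let u : L ⟶ M and f : F ⟶ M be morphisms of ℤ-indexed cochain complexes of abelian groups and let k be an integer. Let φ : L ⊕ F ⟶ M be the morphism φ(l,x) = u(l) + f(x), and let φ_k : L ⊕ σ_{≥k}F ⟶ M be its restriction along the inclusion σ_{≥k}F ⊆ F. Then the map on k-th cohomology H^k(Cone(φ_k)) → H^k(Cone(φ)) induced by the inclusion Cone(φ_k) ⊆ Cone(φ) is surjective. -/
/-! Basic framework: ℤ-indexed cochain complexes of abelian groups, chain maps,
cohomology, mapping cones (with the sign convention
`d(a,b) = (d a, (-1)^(n+1) f a + d b)`), brutal truncations. -/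

universe u

open Cplx in
/-- The inclusion of mapping cones induced by the inclusion `σ_{≥k} F ⊆ F`. -/
def Cplx.coneIncl (L M F : Cplx) (u : Cplx.Hom L M) (f : Cplx.Hom F M) (k : ℤ) :
    Cplx.Hom (cone (sumHom u (f.comp (truncGEincl F k)))) (cone (sumHom u f)) where
  f n := ((AddMonoidHom.id (L.X n)).prodMap (geSub F k n).subtype).prodMap
      (AddMonoidHom.id (M.X (n - 1)))
  comm _ _ := rfl

open Cplx in
/-- Surjectivity of `H^k(Cone(φ_k)) → H^k(Cone(φ))`. -/
theorem stmt2 (L M F : Cplx) (u : Cplx.Hom L M) (f : Cplx.Hom F M) (k : ℤ) :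
    Function.Surjective (Hmap (Cplx.coneIncl L M F u f k) k) := by
  set ι := Cplx.coneIncl L M F u f k with hι
  have hinj : ∀ n : ℤ, Function.Injective (ι.f n) := by
    intro n a b hab
    have h1 : a.1.1 = b.1.1 := congrArg (fun p => p.1.1) hab
    have h2 : a.1.2 = b.1.2 := Subtype.ext (congrArg (fun p => p.1.2) hab)
    have h3 : a.2 = b.2 := congrArg (fun p => p.2) hab
    exact Prod.ext (Prod.ext h1 h2) h3
  intro y
  induction y using QuotientAddGroup.induction_on with
  | H z =>
    obtain ⟨p, hp⟩ := z
    have hmem : p.1.2 ∈ geSub F k k := by simp [geSub]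
    set q : (cone (sumHom u (f.comp (truncGEincl F k)))).X k :=
      ((p.1.1, ⟨p.1.2, hmem⟩), p.2) with hq
    have hfq : ι.f k q = p := rfl
    have hzq : q ∈ (cone (sumHom u (f.comp (truncGEincl F k)))).Zc k := by
      rw [mem_Zc]
      apply hinj (k + 1)
      rw [ι.comm, hfq, map_zero]
      exact mem_Zc.mp hp
    refine ⟨QuotientAddGroup.mk ⟨q, hzq⟩, ?_⟩
    show QuotientAddGroup.mk (zMap ι k ⟨q, hzq⟩) = QuotientAddGroup.mk ⟨p, hp⟩
    exact congrArg QuotientAddGroup.mk (Subtype.ext hfq)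
end
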